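/- arXiv:1901.08171 — 3 statements merged into one kernel-verified Lean document; each statement's English description precedes it below -/
import Mathlib

section
/- If a graph G has chromatic number at least 4, then G has K_4 as a minor. -/
open SimpleGraph

/-- `IsMinor H G` : `H` is a minor of `G`, via the branch-set definition: pairwise disjoint
nonempty connected subsets of `V(G)`, one per vertex of `H`, with an edge of `G` between the
sets corresponding to every edge of `H`. -/
def IsMinor {W V : Type} (H : SimpleGraph W) (G : SimpleGraph V) : Prop :=
  ∃ f : W → Set V,
    (∀ i, (f i).Nonempty) ∧
    (Pairwise fun i j => Disjoint (f i) (f j)) ∧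
    (∀ i, (G.induce (f i)).Connected) ∧
    (∀ i j, H.Adj i j → ∃ u ∈ f i, ∃ v ∈ f j, G.Adj u v)

/-- The graph obtained from `H` by subdividing the edge `xy`: the edge `xy` is deleted and the
new vertex `none` is adjacent exactly to `x` and `y`. -/
def SubdivideEdge {V : Type} (H : SimpleGraph V) (x y : V) : SimpleGraph (Option V) :=
  SimpleGraph.fromRel fun a b =>
    (∃ u v : V, a = some u ∧ b = some v ∧ H.Adj u v ∧ s(u, v) ≠ s(x, y)) ∨
    (a = none ∧ (b = some x ∨ b = some y))

/-- `IsSubdivision G H` : `G` can be obtained from `H` by a finite sequence of edge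
subdivisions (up to isomorphism). -/
inductive IsSubdivision : ∀ {V : Type}, SimpleGraph V → ∀ {W : Type}, SimpleGraph W → Prop
  | of_iso {V W : Type} {G : SimpleGraph V} {H : SimpleGraph W} (e : G ≃g H) :
      IsSubdivision G H
  | step {V W : Type} {G : SimpleGraph V} {H : SimpleGraph W} (x y : W) (hxy : H.Adj x y)
      (h : IsSubdivision G (SubdivideEdge H x y)) : IsSubdivision G H

/-- `H` is (isomorphic to) a subgraph of `G`. -/
def IsSubgraphCopy {W V : Type} (H : SimpleGraph W) (G : SimpleGraph V) : Prop :=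
  ∃ f : H →g G, Function.Injective f

/-- `H` is a topological minor of `G`: some subgraph of `G` is a subdivision of `H`. -/
def IsTopologicalMinor {W V : Type} (H : SimpleGraph W) (G : SimpleGraph V) : Prop :=
  ∃ (U : Type) (K : SimpleGraph U), IsSubdivision K H ∧ IsSubgraphCopy K G

/-- The maximum vertex degree `Δ(G)` of a finite graph. -/
noncomputable def maxDeg {V : Type} [Fintype V] (G : SimpleGraph V) : ℕ :=
  Finset.univ.sup fun v => (G.neighborSet v).ncard

/-- `edgeCount G A B` : the number of edges of `G` with one endpoint in `A`
and the other in `B`. -/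
noncomputable def edgeCount {V : Type} (G : SimpleGraph V) (A B : Set V) : ℕ :=
  {e ∈ G.edgeSet | ∃ u ∈ A, ∃ v ∈ B, e = s(u, v)}.ncard

/-- The Petersen graph: `(false, i)` is the outer vertex `uᵢ`, `(true, i)` is the inner
vertex `vᵢ`; edges are `uᵢuᵢ₊₁`, `uᵢvᵢ`, `vᵢvᵢ₊₂` with indices mod 5. -/
def Petersen : SimpleGraph (Bool × ZMod 5) :=
  SimpleGraph.fromRel fun a b =>
    (a.1 = false ∧ b.1 = false ∧ b.2 = a.2 + 1) ∨
    (a.1 = false ∧ b.1 = true ∧ a.2 = b.2) ∨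
    (a.1 = true ∧ b.1 = true ∧ b.2 = a.2 + 2)

/-- `G` is `k`-connected: more than `k` vertices, and deleting any set of fewer than `k`
vertices leaves a connected graph. -/
def KConnected {V : Type} [Fintype V] (k : ℕ) (G : SimpleGraph V) : Prop :=
  k < Fintype.card V ∧ ∀ S : Set V, S.ncard < k → (G.induce Sᶜ).Connected

section helpers
variable {V W : Type}

lemma walk_mem_closed {G : SimpleGraph V} {s : Set V}
    (hs : ∀ ⦃y z : V⦄, y ∈ s → G.Adj y z → z ∈ s) :
    ∀ {x y : V}, G.Walk x y → x ∈ s → y ∈ s := by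
  intro x y w
  induction w with
  | nil => exact id
  | cons h p ih => exact fun hx => ih (hs hx h)

lemma reachable_induce_of_walk {G : SimpleGraph V} {s : Set V}
    {y z : V} (w : G.Walk y z) (hy : y ∈ s) (hz : z ∈ s)
    (hw : ∀ ⦃a b : V⦄, a ∈ s → G.Adj a b → b ∈ s) :
    (G.induce s).Reachable ⟨y, hy⟩ ⟨z, hz⟩ := by
  induction w with
  | nil => exact Reachable.refl _
  | @cons a m b h p ih =>
      have hm : m ∈ s := hw hy h
      have h1 : (G.induce s).Adj ⟨a, hy⟩ ⟨m, hm⟩ := h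
      exact h1.reachable.trans (ih hm hz)

lemma connected_induce_of_reachable {G : SimpleGraph V} {s : Set V} {x : V} (hx : x ∈ s)
    (hclosed : ∀ ⦃y z : V⦄, y ∈ s → G.Adj y z → z ∈ s)
    (hreach : ∀ y ∈ s, G.Reachable x y) : (G.induce s).Connected := by
  rw [connected_iff]
  refine ⟨?_, ⟨⟨x, hx⟩⟩⟩
  rintro ⟨u, hu⟩ ⟨v, hv⟩
  obtain ⟨w1⟩ := hreach u hu
  obtain ⟨w2⟩ := hreach v hv
  exact (reachable_induce_of_walk w1 hx hu hclosed).symm.trans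
    (reachable_induce_of_walk w2 hx hv hclosed)

lemma connected_induce_singleton (G : SimpleGraph V) (x : V) :
    (G.induce {x}).Connected := by
  rw [connected_iff]
  refine ⟨?_, ⟨⟨x, rfl⟩⟩⟩
  rintro ⟨u, hu⟩ ⟨v, hv⟩
  have : u = v := by
    simp only [Set.mem_singleton_iff] at hu hv; rw [hu, hv]
  subst this
  rfl

noncomputable def induceInduceIso (G : SimpleGraph V) (s : Set V) (t : Set s) :
    (G.induce s).induce t ≃g G.induce (Subtype.val '' t) where
  toEquiv := Equiv.Set.image Subtype.val t Subtype.val_injective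
  map_rel_iff' := Iff.rfl

lemma IsMinor.of_induce {H : SimpleGraph W} {G : SimpleGraph V} {s : Set V}
    (h : IsMinor H (G.induce s)) : IsMinor H G := by
  obtain ⟨f, hne, hdisj, hconn, hadj⟩ := h
  refine ⟨fun i => Subtype.val '' f i, fun i => (hne i).image _, ?_, ?_, ?_⟩
  · intro i j hij
    exact (Set.disjoint_image_iff Subtype.val_injective).2 (hdisj hij)
  · intro i
    exact (induceInduceIso G s (f i)).connected_iff.1 (hconn i)
  · intro i j hij
    obtain ⟨u, hu, v, hv, huv⟩ := hadj i j hij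
    exact ⟨u.1, ⟨u, hu, rfl⟩, v.1, ⟨v, hv, rfl⟩, huv⟩

lemma ncard_neighborSet_induce (G : SimpleGraph V) (s : Set V) (x : s) :
    ((G.induce s).neighborSet x).ncard = (G.neighborSet x.1 ∩ s).ncard := by
  have himg : Subtype.val '' ((G.induce s).neighborSet x) = G.neighborSet x.1 ∩ s := by
    ext y
    constructor
    · rintro ⟨⟨z, hz⟩, hadj, rfl⟩
      exact ⟨hadj, hz⟩
    · rintro ⟨hadj, hy⟩
      exact ⟨⟨y, hy⟩, hadj, rfl⟩
  rw [← himg, Set.ncard_image_of_injective _ Subtype.val_injective]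

lemma isMinor_top4_of_clique {G : SimpleGraph V} {a b c d : V}
    (hab : G.Adj a b) (hac : G.Adj a c) (had : G.Adj a d)
    (hbc : G.Adj b c) (hbd : G.Adj b d) (hcd : G.Adj c d) :
    IsMinor (⊤ : SimpleGraph (Fin 4)) G := by
  refine ⟨fun i => {![a,b,c,d] i}, fun i => ⟨_, rfl⟩, ?_, fun i => connected_induce_singleton _ _, ?_⟩
  · intro i j hij
    rw [Set.disjoint_singleton]
    fin_cases i <;> fin_cases j <;>
      first
        | exact absurd rfl hij
        | simp_all [hab.ne, hac.ne, had.ne, hbc.ne, hbd.ne, hcd.ne,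
            hab.ne', hac.ne', had.ne', hbc.ne', hbd.ne', hcd.ne']
  · intro i j hij
    refine ⟨![a,b,c,d] i, rfl, ![a,b,c,d] j, rfl, ?_⟩
    have hij' : i ≠ j := hij.ne
    fin_cases i <;> fin_cases j <;>
      first
        | exact absurd rfl hij'
        | exact hab | exact hac | exact had | exact hbc | exact hbd | exact hcd
        | exact hab.symm | exact hac.symm | exact had.symm
        | exact hbc.symm | exact hbd.symm | exact hcd.symm

end helpers

section contract
variable {V W : Type}

/-- contraction of the edge `uv`, on vertex type `{x // x ≠ v}`. -/
def Contract (G : SimpleGraph V) (u v : V) : SimpleGraph {x : V // x ≠ v} where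
  Adj a b := a ≠ b ∧ (G.Adj a.1 b.1 ∨ (a.1 = u ∧ G.Adj v b.1) ∨ (b.1 = u ∧ G.Adj a.1 v))
  symm := ⟨by
    rintro a b ⟨hne, h⟩
    refine ⟨hne.symm, ?_⟩
    rcases h with h | ⟨h1, h2⟩ | ⟨h1, h2⟩
    · exact Or.inl h.symm
    · exact Or.inr (Or.inr ⟨h1, h2.symm⟩)
    · exact Or.inr (Or.inl ⟨h1, h2.symm⟩)⟩
  loopless := ⟨fun a h => h.1 rfl⟩

lemma contract_adj {G : SimpleGraph V} {u v : V} {a b : {x : V // x ≠ v}} :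
    (Contract G u v).Adj a b ↔
      a ≠ b ∧ (G.Adj a.1 b.1 ∨ (a.1 = u ∧ G.Adj v b.1) ∨ (b.1 = u ∧ G.Adj a.1 v)) :=
  Iff.rfl

lemma isMinor_of_contract {H : SimpleGraph W} {G : SimpleGraph V} {u v : V} (huv : G.Adj u v)
    (h : IsMinor H (Contract G u v)) : IsMinor H G := by
  classical
  have hu : u ≠ v := huv.ne
  obtain ⟨g, hne, hdisj, hconn, hadj⟩ := h
  set f : W → Set V := fun i => Subtype.val '' g i ∪ {x | x = v ∧ ⟨u, hu⟩ ∈ g i} with hf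
  have hmemL : ∀ i (a : {x : V // x ≠ v}), a ∈ g i → a.1 ∈ f i :=
    fun i a ha => Or.inl ⟨a, ha, rfl⟩
  have hmemV : ∀ i, ⟨u, hu⟩ ∈ g i → v ∈ f i := fun i hui => Or.inr ⟨rfl, hui⟩
  refine ⟨f, ?_, ?_, ?_, ?_⟩
  · intro i
    obtain ⟨a, ha⟩ := hne i
    exact ⟨a.1, hmemL i a ha⟩
  · intro i j hij
    rw [Set.disjoint_left]
    rintro x (⟨a, ha, rfl⟩ | ⟨rfl, hui⟩)
    · rintro (⟨b, hb, hba⟩ | ⟨hav, _⟩)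
      · have : b = a := Subtype.val_injective hba
        subst this
        exact (Set.disjoint_left.1 (hdisj hij) ha) hb
      · exact a.2 hav
    · rintro (⟨b, hb, hbv⟩ | ⟨_, huj⟩)
      · exact b.2 hbv
      · exact (Set.disjoint_left.1 (hdisj hij) hui) huj
  · intro i
    -- connectivity of G.induce (f i)
    have hC := hconn i
    rw [connected_iff] at hC ⊢
    obtain ⟨hpre, ⟨a0⟩⟩ := hC
    -- a0 : ↥(g i)
    have hstep : ∀ (a b : ↥(g i)), ((Contract G u v).induce (g i)).Adj a b →
        (G.induce (f i)).Reachable ⟨a.1.1, hmemL i a.1 a.2⟩ ⟨b.1.1, hmemL i b.1 b.2⟩ := by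
      rintro a b hab
      have hab' : (Contract G u v).Adj a.1 b.1 := hab
      rw [contract_adj] at hab'
      rcases hab'.2 with h | ⟨h1, h2⟩ | ⟨h1, h2⟩
      · exact (Adj.reachable (by exact h : (G.induce (f i)).Adj ⟨a.1.1, _⟩ ⟨b.1.1, _⟩))
      · -- a.1.1 = u, path a - v - b
        have hui : (⟨u, hu⟩ : {x : V // x ≠ v}) ∈ g i := by
          have := a.1.2
          have ha : a.1 = ⟨u, hu⟩ := Subtype.ext h1
          rw [← ha]; exact a.2
        have hv : v ∈ f i := hmemV i hui
        have e1 : (G.induce (f i)).Adj ⟨a.1.1, hmemL i a.1 a.2⟩ ⟨v, hv⟩ := by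
          show G.Adj a.1.1 v
          rw [h1]; exact huv
        have e2 : (G.induce (f i)).Adj ⟨v, hv⟩ ⟨b.1.1, hmemL i b.1 b.2⟩ := by
          show G.Adj v b.1.1
          exact h2
        exact e1.reachable.trans e2.reachable
      · have hui : (⟨u, hu⟩ : {x : V // x ≠ v}) ∈ g i := by
          have hb : b.1 = ⟨u, hu⟩ := Subtype.ext h1
          rw [← hb]; exact b.2
        have hv : v ∈ f i := hmemV i hui
        have e1 : (G.induce (f i)).Adj ⟨a.1.1, hmemL i a.1 a.2⟩ ⟨v, hv⟩ := by
          show G.Adj a.1.1 v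
          exact h2
        have e2 : (G.induce (f i)).Adj ⟨v, hv⟩ ⟨b.1.1, hmemL i b.1 b.2⟩ := by
          show G.Adj v b.1.1
          rw [h1]; exact huv.symm
        exact e1.reachable.trans e2.reachable
    have hreachF : ∀ a b : ↥(g i), (G.induce (f i)).Reachable
        ⟨a.1.1, hmemL i a.1 a.2⟩ ⟨b.1.1, hmemL i b.1 b.2⟩ := by
      intro a b
      obtain ⟨w⟩ := hpre a b
      induction w with
      | nil => exact Reachable.refl _
      | cons h p ih => exact (hstep _ _ h).trans ih
    have hnorm : ∀ (x : V) (hx : x ∈ f i), ∃ a : ↥(g i),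
        (G.induce (f i)).Reachable ⟨x, hx⟩ ⟨a.1.1, hmemL i a.1 a.2⟩ := by
      rintro x hx
      rcases hx with ⟨a, ha, rfl⟩ | ⟨rfl, hui⟩
      · exact ⟨⟨a, ha⟩, Reachable.refl _⟩
      · refine ⟨⟨⟨u, hu⟩, hui⟩, ?_⟩
        have e : (G.induce (f i)).Adj ⟨x, Or.inr ⟨rfl, hui⟩⟩ ⟨u, hmemL i ⟨u, hu⟩ hui⟩ := by
          show G.Adj x u
          exact huv.symm
        exact e.reachable
    refine ⟨?_, ⟨⟨a0.1.1, hmemL i a0.1 a0.2⟩⟩⟩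
    rintro ⟨x, hx⟩ ⟨y, hy⟩
    obtain ⟨ax, hax⟩ := hnorm x hx
    obtain ⟨ay, hay⟩ := hnorm y hy
    exact hax.trans ((hreachF ax ay).trans hay.symm)
  · intro i j hij
    obtain ⟨a, ha, b, hb, hab⟩ := hadj i j hij
    rw [contract_adj] at hab
    rcases hab.2 with h | ⟨h1, h2⟩ | ⟨h1, h2⟩
    · exact ⟨a.1, hmemL i a ha, b.1, hmemL j b hb, h⟩
    · have hui : (⟨u, hu⟩ : {x : V // x ≠ v}) ∈ g i := by
        have ha' : a = ⟨u, hu⟩ := Subtype.ext h1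
        rw [← ha']; exact ha
      exact ⟨v, hmemV i hui, b.1, hmemL j b hb, h2⟩
    · have huj : (⟨u, hu⟩ : {x : V // x ≠ v}) ∈ g j := by
        have hb' : b = ⟨u, hu⟩ := Subtype.ext h1
        rw [← hb']; exact hb
      exact ⟨a.1, hmemL i a ha, v, hmemV j huj, h2⟩

end contract

section cd
variable {V : Type} [Finite V] {G : SimpleGraph V} {u v : V}

lemma contract_deg_ge (hu : u ≠ v) (hcom : G.neighborSet u ∩ G.neighborSet v = ∅)
    (x : {x : V // x ≠ v}) (hxu : x.1 ≠ u) :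
    (G.neighborSet x.1).ncard ≤ ((Contract G u v).neighborSet x).ncard := by
  classical
  set φ : V → {x : V // x ≠ v} := fun y => if h : y = v then ⟨u, hu⟩ else ⟨y, h⟩ with hφ
  apply Set.ncard_le_ncard_of_injOn φ
  · intro y hy
    by_cases h : y = v
    · subst h
      have : φ y = ⟨u, hu⟩ := by simp [hφ]
      rw [this]
      refine ⟨fun hc => hxu (congrArg Subtype.val hc), Or.inr (Or.inr ⟨rfl, hy⟩)⟩
    · have : φ y = ⟨y, h⟩ := by simp [hφ, h]
      rw [this]
      have hadj : G.Adj x.1 y := hy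
      exact ⟨fun hc => hadj.ne (congrArg Subtype.val hc), Or.inl hadj⟩
  · intro y1 h1 y2 h2 he
    by_cases k1 : y1 = v <;> by_cases k2 : y2 = v
    · rw [k1, k2]
    · exfalso
      have e1 : φ y1 = ⟨u, hu⟩ := by simp [hφ, k1]
      have e2 : φ y2 = ⟨y2, k2⟩ := by simp [hφ, k2]
      rw [e1, e2] at he
      have hy2u : y2 = u := (congrArg Subtype.val he).symm
      have a1 : G.Adj x.1 u := by rw [← hy2u]; exact h2
      have a2 : G.Adj x.1 v := by rw [k1] at h1; exact h1
      have : x.1 ∈ G.neighborSet u ∩ G.neighborSet v := ⟨a1.symm, a2.symm⟩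
      rw [hcom] at this
      exact this
    · exfalso
      have e1 : φ y1 = ⟨y1, k1⟩ := by simp [hφ, k1]
      have e2 : φ y2 = ⟨u, hu⟩ := by simp [hφ, k2]
      rw [e1, e2] at he
      have hy1u : y1 = u := congrArg Subtype.val he
      have a1 : G.Adj x.1 u := by rw [← hy1u]; exact h1
      have a2 : G.Adj x.1 v := by rw [k2] at h2; exact h2
      have : x.1 ∈ G.neighborSet u ∩ G.neighborSet v := ⟨a1.symm, a2.symm⟩
      rw [hcom] at this
      exact this
    · have h1' : φ y1 = ⟨y1, k1⟩ := by simp [hφ, k1]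
      have h2' : φ y2 = ⟨y2, k2⟩ := by simp [hφ, k2]
      rw [h1', h2'] at he
      exact congrArg Subtype.val he

lemma contract_deg_merged (huv : G.Adj u v)
    (hcom : G.neighborSet u ∩ G.neighborSet v = ∅) :
    (G.neighborSet u).ncard + (G.neighborSet v).ncard ≤
      ((Contract G u v).neighborSet ⟨u, huv.ne⟩).ncard + 2 := by
  classical
  set S : Set V := (G.neighborSet u ∪ G.neighborSet v) \ {u, v} with hS
  have hcard : (G.neighborSet u).ncard + (G.neighborSet v).ncard = S.ncard + 2 := by
    have e1 : S = (G.neighborSet u \ {v}) ∪ (G.neighborSet v \ {u}) := by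
      ext y
      simp only [hS, Set.mem_diff, Set.mem_union, Set.mem_insert_iff,
        Set.mem_singleton_iff, Set.mem_diff]
      constructor
      · rintro ⟨hy | hy, hne⟩
        · exact Or.inl ⟨hy, fun h => hne (Or.inr h)⟩
        · exact Or.inr ⟨hy, fun h => hne (Or.inl h)⟩
      · rintro (⟨hy, hne⟩ | ⟨hy, hne⟩)
        · exact ⟨Or.inl hy, fun h => h.elim (fun h' => G.irrefl (h' ▸ hy)) hne⟩
        · exact ⟨Or.inr hy, fun h => h.elim hne (fun h' => G.irrefl (h' ▸ hy))⟩
    have hdisj : Disjoint (G.neighborSet u \ {v}) (G.neighborSet v \ {u}) := by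
      rw [Set.disjoint_left]
      rintro y ⟨hy1, _⟩ ⟨hy2, _⟩
      have : y ∈ G.neighborSet u ∩ G.neighborSet v := ⟨hy1, hy2⟩
      rw [hcom] at this
      exact this
    have c1 : (G.neighborSet u \ {v}).ncard + 1 = (G.neighborSet u).ncard :=
      Set.ncard_diff_singleton_add_one (by exact huv) (Set.toFinite _)
    have c2 : (G.neighborSet v \ {u}).ncard + 1 = (G.neighborSet v).ncard :=
      Set.ncard_diff_singleton_add_one (by exact huv.symm) (Set.toFinite _)
    rw [e1, Set.ncard_union_eq hdisj (Set.toFinite _) (Set.toFinite _)]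
    omega
  rw [hcard]
  have : S.ncard ≤ ((Contract G u v).neighborSet ⟨u, huv.ne⟩).ncard := by
    apply Set.ncard_le_ncard_of_injOn (fun y => if h : y = v then ⟨u, huv.ne⟩ else ⟨y, h⟩)
    · rintro y ⟨hy, hne⟩
      simp only [Set.mem_insert_iff, Set.mem_singleton_iff] at hne
      push_neg at hne
      obtain ⟨hyu, hyv⟩ := hne
      have : (fun y => if h : y = v then (⟨u, huv.ne⟩ : {x : V // x ≠ v}) else ⟨y, h⟩) y
          = ⟨y, hyv⟩ := by simp [hyv]
      rw [dif_neg hyv]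
      refine ⟨fun hc => hyu (congrArg Subtype.val hc).symm, ?_⟩
      rcases hy with hy | hy
      · exact Or.inl hy
      · exact Or.inr (Or.inl ⟨rfl, hy⟩)
    · rintro y1 ⟨_, hne1⟩ y2 ⟨_, hne2⟩ he
      simp only [Set.mem_insert_iff, Set.mem_singleton_iff] at hne1 hne2
      push_neg at hne1 hne2
      simp only [dif_neg hne1.2, dif_neg hne2.2] at he
      exact congrArg Subtype.val he
  omega

end cd

section tri
variable {V : Type}

lemma isMinor_top4_of_triangle_set {G : SimpleGraph V} {a b c : V} {R : Set V}
    (hab : G.Adj a b) (hac : G.Adj a c) (hbc : G.Adj b c)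
    (hRa : a ∉ R) (hRb : b ∉ R) (hRc : c ∉ R)
    (hconn : (G.induce R).Connected)
    (ea : ∃ x ∈ R, G.Adj a x) (eb : ∃ x ∈ R, G.Adj b x) (ec : ∃ x ∈ R, G.Adj c x) :
    IsMinor (⊤ : SimpleGraph (Fin 4)) G := by
  refine ⟨![{a}, {b}, {c}, R], ?_, ?_, ?_, ?_⟩
  · intro i
    fin_cases i
    · exact ⟨a, rfl⟩
    · exact ⟨b, rfl⟩
    · exact ⟨c, rfl⟩
    · obtain ⟨x, hx, _⟩ := ea
      exact ⟨x, hx⟩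
  · intro i j hij
    fin_cases i <;> fin_cases j <;>
      first
        | exact absurd rfl hij
        | exact Set.disjoint_singleton_left.2 (by simpa using hab.ne)
        | exact Set.disjoint_singleton_left.2 (by simpa using hac.ne)
        | exact Set.disjoint_singleton_left.2 (by simpa using hbc.ne)
        | exact Set.disjoint_singleton_left.2 (by simpa using hab.ne')
        | exact Set.disjoint_singleton_left.2 (by simpa using hac.ne')
        | exact Set.disjoint_singleton_left.2 (by simpa using hbc.ne')
        | exact Set.disjoint_singleton_left.2 hRa
        | exact Set.disjoint_singleton_left.2 hRb
        | exact Set.disjoint_singleton_left.2 hRc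
        | exact Set.disjoint_singleton_right.2 hRa
        | exact Set.disjoint_singleton_right.2 hRb
        | exact Set.disjoint_singleton_right.2 hRc
  · intro i
    fin_cases i
    · exact connected_induce_singleton G a
    · exact connected_induce_singleton G b
    · exact connected_induce_singleton G c
    · exact hconn
  · intro i j hij
    have hij' : i ≠ j := hij.ne
    fin_cases i <;> fin_cases j <;> first
      | exact absurd rfl hij'
      | exact ⟨a, rfl, b, rfl, hab⟩
      | exact ⟨a, rfl, c, rfl, hac⟩
      | exact ⟨b, rfl, c, rfl, hbc⟩
      | exact ⟨b, rfl, a, rfl, hab.symm⟩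
      | exact ⟨c, rfl, a, rfl, hac.symm⟩
      | exact ⟨c, rfl, b, rfl, hbc.symm⟩
      | (obtain ⟨x, hx, hax⟩ := ea; exact ⟨a, rfl, x, hx, hax⟩)
      | (obtain ⟨x, hx, hax⟩ := eb; exact ⟨b, rfl, x, hx, hax⟩)
      | (obtain ⟨x, hx, hax⟩ := ec; exact ⟨c, rfl, x, hx, hax⟩)
      | (obtain ⟨x, hx, hax⟩ := ea; exact ⟨x, hx, a, rfl, hax.symm⟩)
      | (obtain ⟨x, hx, hax⟩ := eb; exact ⟨x, hx, b, rfl, hax.symm⟩)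
      | (obtain ⟨x, hx, hax⟩ := ec; exact ⟨x, hx, c, rfl, hax.symm⟩)

end tri

section mainlemma
variable {V : Type}

lemma exists_big_vertex [Finite V] {G : SimpleGraph V} (hconn : G.Connected)
    (hn : 5 ≤ Nat.card V)
    (hD : ∀ x y : V, x ≠ y → (G.neighborSet x).ncard < 3 → (G.neighborSet y).ncard < 3 → G.Adj x y)
    (u v : V) : ∃ w : V, w ≠ u ∧ w ≠ v ∧ 3 ≤ (G.neighborSet w).ncard := by
  by_contra hc
  push_neg at hc
  have hcompl : 3 ≤ ({u, v}ᶜ : Set V).ncard := by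
    have h1 : ({u, v} : Set V).ncard ≤ 2 := by
      calc ({u, v} : Set V).ncard ≤ ({v} : Set V).ncard + 1 := Set.ncard_insert_le _ _
        _ ≤ 2 := by rw [Set.ncard_singleton]
    have h2 := Set.ncard_add_ncard_compl ({u, v} : Set V)
    omega
  obtain ⟨x, hx⟩ := Set.nonempty_of_ncard_ne_zero (s := ({u, v}ᶜ : Set V)) (by omega)
  have h2 : 2 ≤ (({u, v}ᶜ : Set V) \ {x}).ncard := by
    have := Set.ncard_diff_singleton_add_one hx (Set.toFinite _)
    omega
  obtain ⟨y, hy⟩ := Set.nonempty_of_ncard_ne_zero (s := (({u, v}ᶜ : Set V) \ {x})) (by omega)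
  have h3 : 1 ≤ ((({u, v}ᶜ : Set V) \ {x}) \ {y}).ncard := by
    have := Set.ncard_diff_singleton_add_one hy (Set.toFinite _)
    omega
  obtain ⟨z, hz⟩ := Set.nonempty_of_ncard_ne_zero
    (s := ((({u, v}ᶜ : Set V) \ {x}) \ {y})) (by omega)
  have hx' := hx
  have hy' := hy
  have hz' := hz
  simp only [Set.mem_diff, Set.mem_compl_iff, Set.mem_insert_iff, Set.mem_singleton_iff,
    not_or] at hx' hy' hz'
  obtain ⟨hxu, hxv⟩ := hx'
  obtain ⟨⟨hyu, hyv⟩, hyx⟩ := hy'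
  obtain ⟨⟨⟨hzu, hzv⟩, hzx⟩, hzy⟩ := hz'
  -- x, y, z distinct, not u, v ; all deficient
  have dx := hc x hxu hxv
  have dy := hc y hyu hyv
  have dz := hc z hzu hzv
  have hxy : x ≠ y := fun h => hyx h.symm
  have hxz : x ≠ z := fun h => hzx h.symm
  have hyz : y ≠ z := fun h => hzy h.symm
  have axy := hD x y hxy dx dy
  have axz := hD x z hxz dx dz
  have ayz := hD y z hyz dy dz
  -- N(x) = {y, z}
  have hNx : ({y, z} : Set V) = G.neighborSet x := by
    apply Set.eq_of_subset_of_ncard_le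
    · rintro q (rfl | rfl)
      · exact axy
      · exact axz
    · have : ({y, z} : Set V).ncard = 2 := Set.ncard_pair hyz
      omega
    · exact Set.toFinite _
  have hNy : ({x, z} : Set V) = G.neighborSet y := by
    apply Set.eq_of_subset_of_ncard_le
    · rintro q (rfl | rfl)
      · exact axy.symm
      · exact ayz
    · have : ({x, z} : Set V).ncard = 2 := Set.ncard_pair hxz
      omega
    · exact Set.toFinite _
  have hNz : ({x, y} : Set V) = G.neighborSet z := by
    apply Set.eq_of_subset_of_ncard_le
    · rintro q (rfl | rfl)
      · exact axz.symm
      · exact ayz.symm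
    · have : ({x, y} : Set V).ncard = 2 := Set.ncard_pair hxy
      omega
    · exact Set.toFinite _
  -- {x,y,z} is closed
  have hcl : ∀ ⦃p q : V⦄, p ∈ ({x, y, z} : Set V) → G.Adj p q → q ∈ ({x, y, z} : Set V) := by
    rintro p q (rfl | rfl | rfl) hadj
    · have : q ∈ G.neighborSet p := hadj
      rw [← hNx] at this
      rcases this with rfl | rfl
      · exact Or.inr (Or.inl rfl)
      · exact Or.inr (Or.inr rfl)
    · have : q ∈ G.neighborSet p := hadj
      rw [← hNy] at this
      rcases this with rfl | rfl
      · exact Or.inl rfl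
      · exact Or.inr (Or.inr rfl)
    · have : q ∈ G.neighborSet p := hadj
      rw [← hNz] at this
      rcases this with rfl | rfl
      · exact Or.inl rfl
      · exact Or.inr (Or.inl rfl)
  obtain ⟨wk⟩ := hconn.preconnected x u
  have : u ∈ ({x, y, z} : Set V) := walk_mem_closed hcl wk (Or.inl rfl)
  rcases this with rfl | rfl | rfl
  · exact hxu rfl
  · exact hyu rfl
  · exact hzu rfl

lemma k4_minor_main : ∀ (n : ℕ) {V : Type} [Finite V] (G : SimpleGraph V),
    Nat.card V ≤ n →
    (∃ w : V, 3 ≤ (G.neighborSet w).ncard) →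
    (∀ x y : V, x ≠ y → (G.neighborSet x).ncard < 3 → (G.neighborSet y).ncard < 3 → G.Adj x y) →
    IsMinor (⊤ : SimpleGraph (Fin 4)) G := by
  intro n
  induction n with
  | zero =>
      intro V _ G hcard hw _
      obtain ⟨w, _⟩ := hw
      haveI : Nonempty V := ⟨w⟩
      have := Nat.card_pos (α := V)
      omega
  | succ n IH =>
      intro V _ G hcard hwex hD
      obtain ⟨w, hw⟩ := hwex
      haveI : Nonempty V := ⟨w⟩
      have hn4 : 4 ≤ Nat.card V := by
        have h1 : (insert w (G.neighborSet w)).ncard = (G.neighborSet w).ncard + 1 :=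
          Set.ncard_insert_of_notMem (fun h => G.irrefl h) (Set.toFinite _)
        have h2 : (insert w (G.neighborSet w)).ncard ≤ (Set.univ : Set V).ncard :=
          Set.ncard_le_ncard (Set.subset_univ _) (Set.toFinite _)
        rw [Set.ncard_univ] at h2
        omega
      by_cases hc4 : Nat.card V ≤ 4
      · -- G is K4
        have hall : ∀ x y : V, x ≠ y → G.Adj x y := by
          intro x y hxy
          by_cases hdx : (G.neighborSet x).ncard < 3
          · by_cases hdy : (G.neighborSet y).ncard < 3
            · exact hD x y hxy hdx hdy
            · push_neg at hdy
              have hy : G.neighborSet y = {y}ᶜ := by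
                apply Set.eq_of_subset_of_ncard_le
                · intro q hq
                  simp only [Set.mem_compl_iff, Set.mem_singleton_iff]
                  exact fun h => G.irrefl (h ▸ hq)
                · have := Set.ncard_add_ncard_compl ({y} : Set V)
                  rw [Set.ncard_singleton] at this
                  omega
                · exact Set.toFinite _
              have : x ∈ G.neighborSet y := by
                rw [hy]
                simpa using hxy
              exact this.symm
          · push_neg at hdx
            have hx : G.neighborSet x = {x}ᶜ := by
              apply Set.eq_of_subset_of_ncard_le
              · intro q hq
                simp only [Set.mem_compl_iff, Set.mem_singleton_iff]
                exact fun h => G.irrefl (h ▸ hq)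
              · have := Set.ncard_add_ncard_compl ({x} : Set V)
                rw [Set.ncard_singleton] at this
                omega
              · exact Set.toFinite _
            have : y ∈ G.neighborSet x := by
              rw [hx]
              simpa using fun h => hxy h.symm
            exact this
        haveI := Fintype.ofFinite V
        have hc : Fintype.card V = 4 := by
          rw [← Nat.card_eq_fintype_card]
          omega
        let e := Fintype.equivFinOfCardEq hc
        have hne : ∀ (i j : Fin 4), i ≠ j → e.symm i ≠ e.symm j :=
          fun i j h hc' => h (e.symm.injective hc')
        exact isMinor_top4_of_clique
          (hall _ _ (hne 0 1 (by decide))) (hall _ _ (hne 0 2 (by decide)))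
          (hall _ _ (hne 0 3 (by decide))) (hall _ _ (hne 1 2 (by decide)))
          (hall _ _ (hne 1 3 (by decide))) (hall _ _ (hne 2 3 (by decide)))
      · push_neg at hc4
        have hc5 : 5 ≤ Nat.card V := hc4
        by_cases hconn : G.Connected
        · by_cases hT : ∀ x y : V, G.Adj x y → ∃ z, G.Adj x z ∧ G.Adj y z
          · -- every edge in a triangle
            obtain ⟨b0, hb0⟩ := Set.nonempty_of_ncard_ne_zero (s := G.neighborSet w) (by omega)
            have hb0' : G.Adj w b0 := hb0
            obtain ⟨c0, hwc0, hbc0⟩ := hT w b0 hb0'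
            set T : Set V := {w, b0, c0} with hTdef
            have hwT : w ∈ T := Or.inl rfl
            have hbT : b0 ∈ T := Or.inr (Or.inl rfl)
            have hcT : c0 ∈ T := Or.inr (Or.inr rfl)
            have hTadj : ∀ p q : V, p ∈ T → q ∈ T → p ≠ q → G.Adj p q := by
              intro p q hp hq hpq
              rcases hp with rfl | rfl | rfl <;> rcases hq with rfl | rfl | rfl <;>
                first
                  | exact absurd rfl hpq
                  | exact hb0'
                  | exact hwc0
                  | exact hbc0
                  | exact hb0'.symm
                  | exact hwc0.symm
                  | exact hbc0.symm
            set S : Set V := Tᶜ with hSdef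
            have hSne : S.Nonempty := by
              apply Set.nonempty_of_ncard_ne_zero
              rw [hSdef]
              have hT3 : T.ncard ≤ 3 := by
                calc T.ncard ≤ ({b0, c0} : Set V).ncard + 1 := Set.ncard_insert_le _ _
                  _ ≤ (({c0} : Set V).ncard + 1) + 1 := by
                      have := Set.ncard_insert_le b0 ({c0} : Set V)
                      omega
                  _ ≤ 3 := by rw [Set.ncard_singleton]
              have := Set.ncard_add_ncard_compl T
              omega
            set G' := G.induce S with hG'
            set RR : ↥S → Set ↥S := fun r => {x : ↥S | G'.Reachable r x} with hRR
            have hRRself : ∀ r : ↥S, r ∈ RR r := fun r => Reachable.refl r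
            have hRRcl : ∀ (r : ↥S) ⦃x y : ↥S⦄, x ∈ RR r → G'.Adj x y → y ∈ RR r :=
              fun r x y hx hadj => Reachable.trans hx hadj.reachable
            by_cases hAll : ∃ r : ↥S, (∃ x ∈ RR r, G.Adj w x.1) ∧ (∃ x ∈ RR r, G.Adj b0 x.1) ∧
                (∃ x ∈ RR r, G.Adj c0 x.1)
            · obtain ⟨r, hwa, hba, hca⟩ := hAll
              have himg : ∀ t : V, t ∈ T → t ∉ Subtype.val '' RR r := by
                rintro t htT ⟨x, _, rfl⟩
                exact x.2 htT
              apply isMinor_top4_of_triangle_set hb0' hwc0 hbc0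
                (himg w hwT) (himg b0 hbT) (himg c0 hcT)
              · exact (induceInduceIso G S (RR r)).connected_iff.1
                  (connected_induce_of_reachable (hRRself r) (hRRcl r) (fun y hy => hy))
              · obtain ⟨x, hx, hadj⟩ := hwa
                exact ⟨x.1, ⟨x, hx, rfl⟩, hadj⟩
              · obtain ⟨x, hx, hadj⟩ := hba
                exact ⟨x.1, ⟨x, hx, rfl⟩, hadj⟩
              · obtain ⟨x, hx, hadj⟩ := hca
                exact ⟨x.1, ⟨x, hx, rfl⟩, hadj⟩
            · have hmiss : ∀ r : ↥S, ∃ t0 ∈ T, ∀ x ∈ RR r, ¬G.Adj t0 x.1 := by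
                intro r
                by_contra hm
                push_neg at hm
                exact hAll ⟨r, hm w hwT, hm b0 hbT, hm c0 hcT⟩
              by_cases hfree : ∃ r : ↥S, ∀ x ∈ RR r, 3 ≤ (G.neighborSet x.1).ncard
              · obtain ⟨r, hr⟩ := hfree
                set U : Set V := Subtype.val '' RR r ∪
                  {t | t ∈ T ∧ ∃ x ∈ RR r, G.Adj t x.1} with hU
                have hnb : ∀ x : ↥S, x ∈ RR r → G.neighborSet x.1 ⊆ U := by
                  intro x hx q hq
                  by_cases hqT : q ∈ T
                  · exact Or.inr ⟨hqT, x, hx, hq.symm⟩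
                  · have hqS : q ∈ S := hqT
                    have hadj' : G'.Adj x ⟨q, hqS⟩ := hq
                    exact Or.inl ⟨⟨q, hqS⟩, hRRcl r hx hadj', rfl⟩
                have hmemU : ∀ (x : ↥S), x ∈ RR r → x.1 ∈ U := fun x hx => Or.inl ⟨x, hx, rfl⟩
                have hdegU : ∀ (z : ↥U), z.1 ∉ T → 3 ≤ ((G.induce U).neighborSet z).ncard := by
                  intro z hzT
                  have hz' : z.1 ∈ U := z.2
                  rcases hz' with ⟨x0, hx0, he⟩ | ⟨hzT', _⟩
                  · rw [ncard_neighborSet_induce]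
                    have hsub : G.neighborSet z.1 ⊆ U := by
                      rw [← he]
                      exact hnb x0 hx0
                    rw [Set.inter_eq_self_of_subset_left hsub]
                    have := hr x0 hx0
                    rw [he] at this
                    exact this
                  · exact absurd hzT' hzT
                apply IsMinor.of_induce (s := U)
                apply IH
                · obtain ⟨t0, ht0T, ht0⟩ := hmiss r
                  have ht0U : t0 ∉ U := by
                    rintro (⟨x, hx, rfl⟩ | ⟨_, x, hx, hadj⟩)
                    · exact x.2 ht0T
                    · exact ht0 x hx hadj
                  have h1 : Nat.card ↥U = U.ncard := Nat.card_coe_set_eq U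
                  have h2 : U.ncard < Nat.card V := by
                    rw [← Set.ncard_univ]
                    refine Set.ncard_lt_ncard ⟨Set.subset_univ _, fun h => ?_⟩ (Set.toFinite _)
                    exact ht0U (h (Set.mem_univ t0))
                  omega
                · refine ⟨⟨r.1, hmemU r (hRRself r)⟩, ?_⟩
                  exact hdegU ⟨r.1, hmemU r (hRRself r)⟩ r.2
                · intro x y hxy hdx hdy
                  have hxT : x.1 ∈ T := by
                    by_contra hc'
                    exact absurd (hdegU x hc') (by omega)
                  have hyT : y.1 ∈ T := by
                    by_contra hc'
                    exact absurd (hdegU y hc') (by omega)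
                  have hvne : x.1 ≠ y.1 := fun h => hxy (Subtype.ext h)
                  exact hTadj x.1 y.1 hxT hyT hvne
              · push_neg at hfree
                obtain ⟨r0v, hr0⟩ := hSne
                set r0 : ↥S := ⟨r0v, hr0⟩ with hr0def
                have huniv : ∀ x : ↥S, x ∈ RR r0 := by
                  intro x
                  obtain ⟨d1, hd1m, hd1⟩ := hfree r0
                  obtain ⟨d2, hd2m, hd2⟩ := hfree x
                  by_cases hdd : d1 = d2
                  · exact Reachable.trans hd1m (hdd ▸ (Reachable.symm hd2m))
                  · have hvne : d1.1 ≠ d2.1 := fun h => hdd (Subtype.ext h)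
                    have hadj : G.Adj d1.1 d2.1 := hD _ _ hvne hd1 hd2
                    have hadj' : G'.Adj d1 d2 := hadj
                    exact (hd1m.trans hadj'.reachable).trans (Reachable.symm hd2m)
                obtain ⟨t0, ht0T, ht0⟩ := hmiss r0
                have hNt0 : G.neighborSet t0 ⊆ T \ {t0} := by
                  intro q hq
                  constructor
                  · by_contra hqT
                    have hqS : q ∈ S := hqT
                    exact ht0 ⟨q, hqS⟩ (huniv _) hq
                  · simp only [Set.mem_singleton_iff]
                    exact fun h => G.irrefl (h ▸ hq)
                have hdt0 : (G.neighborSet t0).ncard < 3 := by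
                  have hle : (G.neighborSet t0).ncard ≤ (T \ {t0}).ncard :=
                    Set.ncard_le_ncard hNt0 (Set.toFinite _)
                  have hpair : (T \ {t0}).ncard ≤ 2 := by
                    rcases ht0T with rfl | rfl | rfl
                    · have hsub : T \ {t0} ⊆ {b0, c0} := by
                        rintro q ⟨(rfl | rfl | rfl), hne⟩
                        · exact absurd rfl hne
                        · exact Or.inl rfl
                        · exact Or.inr rfl
                      calc (T \ {t0}).ncard ≤ ({b0, c0} : Set V).ncard :=
                            Set.ncard_le_ncard hsub (Set.toFinite _)
                        _ ≤ ({c0} : Set V).ncard + 1 := Set.ncard_insert_le _ _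
                        _ ≤ 2 := by rw [Set.ncard_singleton]
                    · have hsub : T \ {t0} ⊆ {w, c0} := by
                        rintro q ⟨(rfl | rfl | rfl), hne⟩
                        · exact Or.inl rfl
                        · exact absurd rfl hne
                        · exact Or.inr rfl
                      calc (T \ {t0}).ncard ≤ ({w, c0} : Set V).ncard :=
                            Set.ncard_le_ncard hsub (Set.toFinite _)
                        _ ≤ ({c0} : Set V).ncard + 1 := Set.ncard_insert_le _ _
                        _ ≤ 2 := by rw [Set.ncard_singleton]
                    · have hsub : T \ {t0} ⊆ {w, b0} := by
                        rintro q ⟨(rfl | rfl | rfl), hne⟩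
                        · exact Or.inl rfl
                        · exact Or.inr rfl
                        · exact absurd rfl hne
                      calc (T \ {t0}).ncard ≤ ({w, b0} : Set V).ncard :=
                            Set.ncard_le_ncard hsub (Set.toFinite _)
                        _ ≤ ({b0} : Set V).ncard + 1 := Set.ncard_insert_le _ _
                        _ ≤ 2 := by rw [Set.ncard_singleton]
                  omega
                obtain ⟨d1, hd1m, hd1⟩ := hfree r0
                have hne : t0 ≠ d1.1 := fun h => d1.2 (h ▸ ht0T)
                have hadj := hD t0 d1.1 hne hdt0 hd1
                exact absurd hadj (ht0 d1 hd1m)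
          · -- some edge in no triangle: contract it
            push_neg at hT
            obtain ⟨u, v, huv, hcom'⟩ := hT
            have hcom : G.neighborSet u ∩ G.neighborSet v = ∅ := by
              ext q
              simp only [Set.mem_inter_iff, Set.mem_empty_iff_false, iff_false]
              rintro ⟨h1, h2⟩
              exact hcom' q h1 h2
            obtain ⟨w', hwu, hwv, hw3⟩ := exists_big_vertex hconn hc5 hD u v
            have hminor : IsMinor (⊤ : SimpleGraph (Fin 4)) (Contract G u v) := by
              apply IH
              · have h1 : Nat.card {x : V // x ≠ v} = ({x : V | x ≠ v} : Set V).ncard :=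
                  Nat.card_coe_set_eq _
                have h2 : ({x : V | x ≠ v} : Set V).ncard < Nat.card V := by
                  rw [← Set.ncard_univ]
                  refine Set.ncard_lt_ncard ⟨Set.subset_univ _, fun h => ?_⟩ (Set.toFinite _)
                  exact (h (Set.mem_univ v)) rfl
                omega
              · exact ⟨⟨w', hwv⟩, le_trans hw3 (contract_deg_ge huv.ne hcom ⟨w', hwv⟩ hwu)⟩
              · intro x y hxy hdx hdy
                by_cases hxu : x.1 = u
                · have hxm : x = ⟨u, huv.ne⟩ := Subtype.ext hxu
                  have hyu : y.1 ≠ u := fun h => hxy (Subtype.ext (by rw [hxu, h]))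
                  have hdy' : (G.neighborSet y.1).ncard < 3 :=
                    lt_of_le_of_lt (contract_deg_ge huv.ne hcom y hyu) hdy
                  have hsum := contract_deg_merged huv hcom
                  rw [hxm] at hdx
                  by_cases hdu : (G.neighborSet u).ncard < 3
                  · have hne' : u ≠ y.1 := fun h => hyu h.symm
                    have hadj := hD u y.1 hne' hdu hdy'
                    exact (contract_adj).2 ⟨hxy, Or.inl (by rw [hxu]; exact hadj)⟩
                  · have hdv : (G.neighborSet v).ncard < 3 := by omega
                    have hne' : v ≠ y.1 := fun h => y.2 h.symm
                    have hadj := hD v y.1 hne' hdv hdy'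
                    exact (contract_adj).2 ⟨hxy, Or.inr (Or.inl ⟨hxu, hadj⟩)⟩
                · by_cases hyu : y.1 = u
                  · have hym : y = ⟨u, huv.ne⟩ := Subtype.ext hyu
                    have hxu' : x.1 ≠ u := hxu
                    have hdx' : (G.neighborSet x.1).ncard < 3 :=
                      lt_of_le_of_lt (contract_deg_ge huv.ne hcom x hxu') hdx
                    have hsum := contract_deg_merged huv hcom
                    rw [hym] at hdy
                    have hyx : (Contract G u v).Adj y x := by
                      by_cases hdu : (G.neighborSet u).ncard < 3
                      · have hne' : u ≠ x.1 := fun h => hxu h.symm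
                        have hadj := hD u x.1 hne' hdu hdx'
                        exact (contract_adj).2 ⟨fun h => hxy h.symm,
                          Or.inl (by rw [hyu]; exact hadj)⟩
                      · have hdv : (G.neighborSet v).ncard < 3 := by omega
                        have hne' : v ≠ x.1 := fun h => x.2 h.symm
                        have hadj := hD v x.1 hne' hdv hdx'
                        exact (contract_adj).2 ⟨fun h => hxy h.symm,
                          Or.inr (Or.inl ⟨hyu, hadj⟩)⟩
                    exact hyx.symm
                  · have hdx' := lt_of_le_of_lt (contract_deg_ge huv.ne hcom x hxu) hdx
                    have hdy' := lt_of_le_of_lt (contract_deg_ge huv.ne hcom y hyu) hdy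
                    have hne' : x.1 ≠ y.1 := fun h => hxy (Subtype.ext h)
                    exact (contract_adj).2 ⟨hxy, Or.inl (hD _ _ hne' hdx' hdy')⟩
            exact isMinor_of_contract huv hminor
        · -- disconnected: pass to the component of w
          set C : Set V := {x | G.Reachable w x} with hC
          have hCcl : ∀ ⦃y z : V⦄, y ∈ C → G.Adj y z → z ∈ C :=
            fun y z hy h => hy.trans h.reachable
          have hwC : w ∈ C := Reachable.refl w
          obtain ⟨z0, hz0⟩ : ∃ z, z ∉ C := by
            by_contra hallc
            push_neg at hallc
            apply hconn
            rw [connected_iff]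
            exact ⟨fun x y => (hallc x).symm.trans (hallc y), ⟨w⟩⟩
          have hdeg : ∀ x : ↥C, ((G.induce C).neighborSet x).ncard = (G.neighborSet x.1).ncard := by
            intro x
            rw [ncard_neighborSet_induce]
            congr 1
            apply Set.inter_eq_self_of_subset_left
            intro q hq
            exact hCcl x.2 hq
          apply IsMinor.of_induce (s := C)
          apply IH
          · have h1 : Nat.card ↥C = C.ncard := Nat.card_coe_set_eq C
            have h2 : C.ncard < Nat.card V := by
              rw [← Set.ncard_univ]
              refine Set.ncard_lt_ncard ⟨Set.subset_univ _, fun h => ?_⟩ (Set.toFinite _)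
              exact hz0 (h (Set.mem_univ z0))
            omega
          · refine ⟨⟨w, hwC⟩, ?_⟩
            rw [hdeg]
            exact hw
          · intro x y hxy hdx hdy
            rw [hdeg] at hdx hdy
            have hvne : x.1 ≠ y.1 := fun h => hxy (Subtype.ext h)
            exact hD x.1 y.1 hvne hdx hdy

end mainlemma

lemma colorable_of_no_k4 : ∀ (n : ℕ) {V : Type} [Finite V] (G : SimpleGraph V),
    Nat.card V ≤ n → ¬ IsMinor (⊤ : SimpleGraph (Fin 4)) G → G.Colorable 3 := by
  intro n
  induction n with
  | zero =>
      intro V _ G hcard _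
      haveI : IsEmpty V := by
        rw [← not_nonempty_iff]
        intro hne
        have := Nat.card_pos (α := V)
        omega
      exact ⟨Coloring.mk (fun v => isEmptyElim v) (fun {a b} _ => isEmptyElim a)⟩
  | succ n IH =>
      intro V _ G hcard hm
      classical
      by_cases hne : Nonempty V
      · by_cases hdef : ∃ v : V, (G.neighborSet v).ncard < 3
        · obtain ⟨v, hv⟩ := hdef
          set s : Set V := {x | x ≠ v} with hs
          have hcard' : Nat.card ↥s ≤ n := by
            have h1 : Nat.card ↥s = s.ncard := Nat.card_coe_set_eq s
            have h2 : s.ncard < Nat.card V := by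
              rw [← Set.ncard_univ]
              refine Set.ncard_lt_ncard ⟨Set.subset_univ _, fun h => ?_⟩ (Set.toFinite _)
              exact (h (Set.mem_univ v)) rfl
            omega
          obtain ⟨C⟩ := IH (G.induce s) hcard' (fun h => hm h.of_induce)
          set g : V → Fin 3 := fun y => if h : y = v then 0 else C ⟨y, h⟩ with hg
          have hIle : (g '' G.neighborSet v).ncard < 3 := by
            have h1 : (g '' G.neighborSet v).ncard ≤ (G.neighborSet v).ncard :=
              Set.ncard_image_le (Set.toFinite _)
            omega
          obtain ⟨c, hc⟩ : ∃ c : Fin 3, c ∉ g '' G.neighborSet v := by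
            by_contra hcc
            push_neg at hcc
            have : (g '' G.neighborSet v) = Set.univ := Set.eq_univ_of_forall hcc
            rw [this, Set.ncard_univ, Nat.card_eq_fintype_card, Fintype.card_fin] at hIle
            omega
          refine ⟨Coloring.mk (fun y => if h : y = v then c else C ⟨y, h⟩) ?_⟩
          intro a b hadj
          by_cases ha : a = v
          · have hb : b ≠ v := fun h => hadj.ne (ha.trans h.symm)
            simp only [dif_pos ha, dif_neg hb]
            intro h
            apply hc
            refine ⟨b, (ha ▸ hadj : G.Adj v b), ?_⟩
            rw [hg]
            simp only [dif_neg hb]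
            exact h.symm
          · by_cases hb : b = v
            · simp only [dif_pos hb, dif_neg ha]
              intro h
              apply hc
              refine ⟨a, ((hb ▸ hadj : G.Adj a v)).symm, ?_⟩
              rw [hg]
              simp only [dif_neg ha]
              exact h
            · simp only [dif_neg ha, dif_neg hb]
              exact C.valid (by exact hadj : (G.induce s).Adj ⟨a, ha⟩ ⟨b, hb⟩)
        · push_neg at hdef
          obtain ⟨w⟩ := hne
          exact absurd (k4_minor_main (n + 1) G hcard ⟨w, hdef w⟩
            (fun x y _ hx _ => absurd hx (not_lt.2 (hdef x)))) hm
      · rw [not_nonempty_iff] at hne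
        exact ⟨Coloring.mk (fun v => isEmptyElim v) (fun {a b} _ => isEmptyElim a)⟩


/-- If `χ(G) ≥ 4`, then `G` has `K₄` as a minor. -/
theorem k4_minor_of_chromaticNumber {V : Type} [Fintype V] [Nonempty V]
    (G : SimpleGraph V) (h : 4 ≤ G.chromaticNumber) :
    IsMinor (⊤ : SimpleGraph (Fin 4)) G := by
  by_contra hm
  have hcol : G.Colorable 3 := colorable_of_no_k4 (Nat.card V) G le_rfl hm
  have hle : G.chromaticNumber ≤ 3 := hcol.chromaticNumber_le
  have h43 : (4 : ℕ∞) ≤ 3 := le_trans h hle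
  norm_num at h43
end

section
/- Let G be a connected graph and x a vertex of G. Then there exists d ≥ 0 such that the induced subgraph G[S_d(x)] satisfies χ(G[S_d(x)]) ≥ χ(G)/2, i.e., 2·χ(G[S_d(x)]) ≥ χ(G). -/
open SimpleGraph

/-- For a connected graph `G` and vertex `x`, some distance layer `S_d(x)` satisfies
`χ(G[S_d(x)]) ≥ χ(G) / 2`, i.e. `2 · χ(G[S_d(x)]) ≥ χ(G)`. -/
theorem exists_layer_large_chromaticNumber {V : Type} [Fintype V] [Nonempty V]
    (G : SimpleGraph V) (hG : G.Connected) (x : V) :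
    ∃ d : ℕ, G.chromaticNumber ≤ 2 * (G.induce {y : V | G.dist x y = d}).chromaticNumber := by
  classical
  set L : ℕ → Set V := fun d => {y : V | G.dist x y = d} with hL
  set n : ℕ → ℕ := fun d => ((G.induce (L d)).chromaticNumber).toNat with hn
  have hcoln : ∀ d, (G.induce (L d)).Colorable (n d) := fun d =>
    (G.induce (L d)).colorable_chromaticNumber_of_fintype
  set D : Finset ℕ := Finset.image (G.dist x) Finset.univ with hD
  have hDne : D.Nonempty := ⟨G.dist x x, by simp [hD]⟩
  obtain ⟨d0, hd0D, hd0⟩ := D.exists_mem_eq_sup hDne n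
  set N : ℕ := D.sup n with hN
  -- every layer is colorable with N colors
  have hcolN : ∀ d : ℕ, (G.induce (L d)).Colorable N := by
    intro d
    by_cases hd : ∃ v : V, G.dist x v = d
    · refine (hcoln d).mono ?_
      obtain ⟨v, hv⟩ := hd
      exact Finset.le_sup (by simp [hD, ← hv])
    · have : IsEmpty (L d) := by
        constructor; rintro ⟨v, hv⟩; exact hd ⟨v, hv⟩
      exact SimpleGraph.Colorable.of_isEmpty (G := G.induce (L d)) N
  have C : ∀ d : ℕ, (G.induce (L d)).Coloring (Fin N) := fun d => (hcolN d).some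
  have Ccongr : ∀ (d₁ d₂ : ℕ) (h : d₁ = d₂) (v : V) (h1 : G.dist x v = d₁)
      (h2 : G.dist x v = d₂), C d₁ ⟨v, h1⟩ = C d₂ ⟨v, h2⟩ := by
    intro d₁ d₂ h v h1 h2; subst h; rfl
  -- distances of adjacent vertices differ by at most one
  have hdistadj : ∀ u v : V, G.Adj u v → G.dist x u ≤ G.dist x v + 1 := by
    intro u v huv
    calc G.dist x u ≤ G.dist x v + G.dist v u := hG.dist_triangle
      _ = G.dist x v + 1 := by rw [show G.dist v u = 1 from dist_eq_one_iff_adj.mpr huv.symm]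
  -- build a coloring of G with 2N colors
  have hcolG : G.Colorable (2 * N) := by
    have CG : G.Coloring (Fin 2 × Fin N) := by
      refine Coloring.mk
        (fun v => (⟨G.dist x v % 2, Nat.mod_lt _ (by norm_num)⟩,
          C (G.dist x v) ⟨v, rfl⟩)) ?_
      intro u v huv hne
      have h1 := hdistadj u v huv
      have h2 := hdistadj v u huv.symm
      rcases Nat.lt_trichotomy (G.dist x u) (G.dist x v) with h | h | h
      · have : G.dist x v = G.dist x u + 1 := by omega
        apply (Prod.mk.injEq _ _ _ _).mp at hne
        have : G.dist x u % 2 ≠ G.dist x v % 2 := by omega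
        exact this (congrArg Fin.val hne.1)
      · have := (C (G.dist x u)).valid (v := ⟨u, rfl⟩) (w := ⟨v, h.symm⟩)
          (by exact huv)
        apply (Prod.mk.injEq _ _ _ _).mp at hne
        refine this ?_
        rw [hne.2]
        exact Ccongr _ _ h.symm v rfl h.symm
      · apply (Prod.mk.injEq _ _ _ _).mp at hne
        have : G.dist x u % 2 ≠ G.dist x v % 2 := by omega
        exact this (congrArg Fin.val hne.1)
    simpa using CG.colorable
  refine ⟨d0, ?_⟩
  have h1 : G.chromaticNumber ≤ (2 * N : ℕ) := hcolG.chromaticNumber_le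
  have h2 : ((n d0 : ℕ) : ℕ∞) = (G.induce (L d0)).chromaticNumber := by
    rw [hn]
    exact ENat.coe_toNat (by
      intro htop
      have := ((G.induce (L d0)).colorable_of_fintype).chromaticNumber_le
      rw [htop] at this
      exact ENat.coe_ne_top _ (top_le_iff.mp this) )
  calc G.chromaticNumber ≤ ((2 * N : ℕ) : ℕ∞) := h1
    _ = 2 * ((n d0 : ℕ) : ℕ∞) := by rw [hd0]; push_cast; ring
    _ = 2 * (G.induce (L d0)).chromaticNumber := by rw [h2]
end

section
/- For every k ≥ 2, if a graph G has chromatic number at least 2^k, then G has the complete graph K_k as a minor. -/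
open SimpleGraph

section AuxKkMinor

variable {V : Type} {G : SimpleGraph V} {u v w : V}

lemma aux_dist_succ (hr : G.Reachable v u) (h : G.Adj u w) :
    G.dist v w ≤ G.dist v u + 1 := by
  obtain ⟨p, hp⟩ := hr.exists_walk_length_eq_dist
  have := SimpleGraph.dist_le (p.concat h)
  rwa [Walk.length_concat, hp] at this

lemma aux_pred {j : ℕ} (hr : G.Reachable v u) (hd : G.dist v u = j + 1) :
    ∃ w, G.Adj w u ∧ G.Reachable v w ∧ G.dist v w = j := by
  obtain ⟨p, hp⟩ := hr.exists_walk_length_eq_dist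
  rw [hd] at hp
  cases hpr : p.reverse with
  | nil =>
    have := p.length_reverse
    rw [hpr] at this
    simp [hp] at this
  | @cons _ w _ ha q =>
    have hlen : q.length = j := by
      have := p.length_reverse
      rw [hpr] at this
      simp only [Walk.length_cons, hp] at this
      omega
    have hrw : G.Reachable v w := q.reverse.reachable
    refine ⟨w, ha.symm, hrw, le_antisymm ?_ ?_⟩
    · have := SimpleGraph.dist_le q.reverse
      rwa [Walk.length_reverse, hlen] at this
    · have := aux_dist_succ hrw ha.symm
      omega

lemma aux_component {n : ℕ} (h : ¬ G.Colorable n) :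
    ∃ v : V, ¬ (G.induce {u | G.Reachable v u}).Colorable n := by
  classical
  by_contra hc
  push_neg at hc
  apply h
  rcases isEmpty_or_nonempty V with hV | hV
  · exact Colorable.of_isEmpty (G := G) n
  obtain ⟨v0⟩ := hV
  have C : ∀ v : V, (G.induce {u | G.Reachable v u}).Coloring (Fin n) :=
    fun v => (hc v).some
  have d : Fin n := C v0 ⟨v0, Reachable.refl v0⟩
  set rep : V → V := fun u => (G.connectedComponentMk u).out with hrep
  have hreach : ∀ u, G.Reachable (rep u) u := fun u =>
    ConnectedComponent.exact ((G.connectedComponentMk u).out_eq)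
  set F : V → V → Fin n := fun r u => if h : G.Reachable r u then C r ⟨u, h⟩ else d with hF
  refine ⟨Coloring.mk (fun u => F (rep u) u) ?_⟩
  intro a b hab
  have e : rep b = rep a := by
    simp only [hrep]
    rw [ConnectedComponent.sound hab.reachable]
  show F (rep a) a ≠ F (rep b) b
  rw [e]
  have hra := hreach a
  have hrb : G.Reachable (rep a) b := hra.trans hab.reachable
  simp only [hF, dif_pos hra, dif_pos hrb]
  exact (C (rep a)).valid (v := ⟨a, hra⟩) (w := ⟨b, hrb⟩) hab

lemma aux_levels {m : ℕ} (v : V)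
    (h : ∀ i : ℕ, (G.induce {u | G.Reachable v u ∧ G.dist v u = i}).Colorable m) :
    (G.induce {u | G.Reachable v u}).Colorable (2 * m) := by
  classical
  have C : ∀ i : ℕ, (G.induce {u | G.Reachable v u ∧ G.dist v u = i}).Coloring (Fin m) :=
    fun i => (h i).some
  have d : Fin m := C 0 ⟨v, ⟨Reachable.refl v, SimpleGraph.dist_self⟩⟩
  set F : ℕ → V → Fin m := fun i u =>
    if h : u ∈ {u | G.Reachable v u ∧ G.dist v u = i} then C i ⟨u, h⟩ else d with hF
  have col : (G.induce {u | G.Reachable v u}).Coloring (Fin 2 × Fin m) := by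
    refine Coloring.mk
      (fun u => (⟨G.dist v u.1 % 2, Nat.mod_lt _ (by norm_num)⟩, F (G.dist v u.1) u.1)) ?_
    rintro ⟨a, ha⟩ ⟨b, hb⟩ hab
    have hab' : G.Adj a b := hab
    by_cases hde : G.dist v a = G.dist v b
    · intro hcon
      have h2 := congrArg Prod.snd hcon
      simp only at h2
      rw [← hde] at h2
      have hamem : a ∈ {u | G.Reachable v u ∧ G.dist v u = G.dist v a} := ⟨ha, rfl⟩
      have hbmem : b ∈ {u | G.Reachable v u ∧ G.dist v u = G.dist v a} := ⟨hb, hde.symm⟩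
      rw [hF] at h2
      simp only [dif_pos hamem, dif_pos hbmem] at h2
      exact (C (G.dist v a)).valid (v := ⟨a, hamem⟩) (w := ⟨b, hbmem⟩) hab' h2
    · intro hcon
      have h1 := congrArg (fun p => (Prod.fst p).1) hcon
      simp only at h1
      have d1 : G.dist v b ≤ G.dist v a + 1 := aux_dist_succ ha hab'
      have d2 : G.dist v a ≤ G.dist v b + 1 := aux_dist_succ hb hab'.symm
      omega
  have := col.colorable
  simpa using this

lemma aux_ball_connected (v : V) {i : ℕ} (hi : 0 < i) :
    (G.induce {u | G.Reachable v u ∧ G.dist v u < i}).Connected := by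
  set B := {u | G.Reachable v u ∧ G.dist v u < i} with hB
  have hv : v ∈ B := ⟨Reachable.refl v, by simpa [SimpleGraph.dist_self] using hi⟩
  have key : ∀ (n : ℕ) (u : V) (hu : u ∈ B), G.dist v u = n →
      (G.induce B).Reachable ⟨u, hu⟩ ⟨v, hv⟩ := by
    intro n
    induction n using Nat.strong_induction_on with
    | _ n ih =>
      intro u hu hd
      obtain ⟨hur, hud⟩ := id hu
      match n, hd with
      | 0, hd =>
        have huv : u = v := ((hur.dist_eq_zero_iff).mp hd).symm
        subst huv
        exact Reachable.refl _
      | (j+1), hd =>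
        obtain ⟨w, hadj, hrw, hdw⟩ := aux_pred hur hd
        have hwB : w ∈ B := ⟨hrw, by omega⟩
        have hadj2 : (G.induce B).Adj ⟨w, hwB⟩ ⟨u, hu⟩ := hadj
        exact (hadj2.symm.reachable).trans (ih j (by omega) w hwB hdw)
  haveI : Nonempty ↥B := ⟨⟨v, hv⟩⟩
  exact ⟨fun a b => (key _ a.1 a.2 rfl).trans (key _ b.1 b.2 rfl).symm⟩

lemma aux_induce_induce_connected {S : Set V} {T : Set ↥S}
    (h : ((G.induce S).induce T).Connected) :
    (G.induce (Subtype.val '' T)).Connected := by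
  have e : ((G.induce S).induce T) ≃g (G.induce (Subtype.val '' T)) := by
    refine ⟨Equiv.Set.image Subtype.val T Subtype.val_injective, ?_⟩
    intro a b
    simp [Equiv.Set.image, Equiv.Set.imageOfInjOn]
  exact e.connected_iff.mp h

lemma aux_core : ∀ (k : ℕ), 1 ≤ k → ∀ (V : Type) [Fintype V] (G : SimpleGraph V),
    ¬ G.Colorable (2 ^ k - 1) → IsMinor (⊤ : SimpleGraph (Fin k)) G := by
  intro k hk
  induction k, hk using Nat.le_induction with
  | base =>
    intro V _ G h
    have hne : Nonempty V := by
      by_contra hE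
      rw [not_nonempty_iff] at hE
      exact h (Colorable.of_isEmpty (G := G) _)
    obtain ⟨v⟩ := hne
    refine ⟨fun _ => {v}, fun _ => ⟨v, rfl⟩, ?_, ?_, ?_⟩
    · intro i j hij; exact absurd (Subsingleton.elim i j) hij
    · intro i
      haveI : Nonempty ↥({v} : Set V) := ⟨⟨v, rfl⟩⟩
      refine ⟨fun a b => ?_⟩
      have : a = b := Subtype.ext (a.2.trans b.2.symm)
      rw [this]
    · intro i j hij
      simp only [top_adj] at hij
      exact absurd (Subsingleton.elim i j) hij
  | succ k hk ih =>
    intro V _ G h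
    obtain ⟨v, hv⟩ := aux_component h
    have hlev : ∃ i : ℕ,
        ¬ (G.induce {u | G.Reachable v u ∧ G.dist v u = i}).Colorable (2 ^ k - 1) := by
      by_contra hc
      push_neg at hc
      have hcc := aux_levels v hc
      refine hv (hcc.mono ?_)
      have h1 : 1 ≤ 2 ^ k := Nat.one_le_two_pow
      have h2 : 2 ^ (k+1) = 2 * 2 ^ k := by rw [pow_succ]; ring
      omega
    obtain ⟨i, hi⟩ := hlev
    set L := {u | G.Reachable v u ∧ G.dist v u = i} with hL
    have hipos : 0 < i := by
      rcases Nat.eq_zero_or_pos i with h0 | hp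
      · exfalso
        apply hi
        have hLv : ∀ a ∈ L, a = v := fun a ha =>
          ((ha.1.dist_eq_zero_iff).mp (h0 ▸ ha.2)).symm
        have hcol : (G.induce L).Colorable 1 := by
          refine ⟨Coloring.mk (fun _ => 0) ?_⟩
          rintro ⟨a, ha⟩ ⟨b, hb⟩ hab
          have hadjv : G.Adj a b := hab
          rw [hLv a ha, hLv b hb] at hadjv
          exact absurd hadjv (G.irrefl)
        refine hcol.mono ?_
        have h2 : 2 ≤ 2 ^ k := by
          calc 2 = 2 ^ 1 := rfl
            _ ≤ 2 ^ k := Nat.pow_le_pow_right (by norm_num) hk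
        omega
      · exact hp
    obtain ⟨i', rfl⟩ : ∃ i', i = i' + 1 := ⟨i - 1, by omega⟩
    haveI : Fintype ↥L := Fintype.ofFinite _
    obtain ⟨f, hfne, hfdisj, hfconn, hfadj⟩ := ih ↥L (G.induce L) hi
    set B := {u | G.Reachable v u ∧ G.dist v u < i' + 1} with hB
    have hBconn : (G.induce B).Connected := aux_ball_connected v (Nat.succ_pos i')
    have hvB : v ∈ B := ⟨Reachable.refl v, by simp [SimpleGraph.dist_self]⟩
    have hnb : ∀ u ∈ L, ∃ w ∈ B, G.Adj w u := by
      intro u hu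
      obtain ⟨w, hadj, hrw, hdw⟩ := aux_pred hu.1 hu.2
      exact ⟨w, ⟨hrw, by omega⟩, hadj⟩
    have himgL : ∀ (j : Fin k) (x : V), x ∈ Subtype.val '' f j → x ∈ L := by
      rintro j x ⟨a, _, rfl⟩
      exact a.2
    refine ⟨fun j => Fin.cases B (fun j' => Subtype.val '' f j') j, ?_, ?_, ?_, ?_⟩
    · intro j
      refine Fin.cases ?_ ?_ j
      · exact ⟨v, hvB⟩
      · intro j'
        exact (hfne j').image _
    · intro j1 j2 hne
      rcases Fin.eq_zero_or_eq_succ j1 with rfl | ⟨j1', rfl⟩ <;>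
        rcases Fin.eq_zero_or_eq_succ j2 with rfl | ⟨j2', rfl⟩
      · exact absurd rfl hne
      · simp only [Fin.cases_zero, Fin.cases_succ]
        rw [Set.disjoint_left]
        rintro x hxB hximg
        have hxL := himgL j2' x hximg
        have := hxL.2
        have := hxB.2
        omega
      · simp only [Fin.cases_zero, Fin.cases_succ]
        rw [Set.disjoint_right]
        rintro x hxB hximg
        have hxL := himgL j1' x hximg
        have := hxL.2
        have := hxB.2
        omega
      · simp only [Fin.cases_succ]
        refine (Set.disjoint_image_iff Subtype.val_injective).mpr ?_
        exact hfdisj (fun e => hne (by rw [e]))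
    · intro j
      refine Fin.cases ?_ ?_ j
      · exact hBconn
      · intro j'
        exact aux_induce_induce_connected (hfconn j')
    · intro j1 j2 hadj
      have hne : j1 ≠ j2 := by simpa using hadj
      rcases Fin.eq_zero_or_eq_succ j1 with rfl | ⟨j1', rfl⟩ <;>
        rcases Fin.eq_zero_or_eq_succ j2 with rfl | ⟨j2', rfl⟩
      · exact absurd rfl hne
      · obtain ⟨a, haf⟩ := hfne j2'
        obtain ⟨w, hwB, hw⟩ := hnb a.1 a.2
        exact ⟨w, hwB, a.1, ⟨a, haf, rfl⟩, hw⟩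
      · obtain ⟨a, haf⟩ := hfne j1'
        obtain ⟨w, hwB, hw⟩ := hnb a.1 a.2
        exact ⟨a.1, ⟨a, haf, rfl⟩, w, hwB, hw.symm⟩
      · have hne' : j1' ≠ j2' := fun e => hne (by rw [e])
        obtain ⟨u, huf, w, hwf, huw⟩ := hfadj j1' j2' (by simpa using hne')
        exact ⟨u.1, ⟨u, huf, rfl⟩, w.1, ⟨w, hwf, rfl⟩, huw⟩

end AuxKkMinor

/-- For every `k ≥ 2`, if `χ(G) ≥ 2 ^ k`, then `G` has `K_k` as a minor. -/
theorem kk_minor_of_chromaticNumber_ge_two_pow {k : ℕ} (hk : 2 ≤ k)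
    {V : Type} [Fintype V] [Nonempty V] (G : SimpleGraph V)
    (h : (2 ^ k : ℕ∞) ≤ G.chromaticNumber) :
    IsMinor (⊤ : SimpleGraph (Fin k)) G := by
  have h1 : ¬ G.Colorable (2 ^ k - 1) := by
    intro hc
    have h2 := hc.chromaticNumber_le
    have h3 := h.trans h2
    rw [show ((2 : ℕ∞) ^ k) = ((2 ^ k : ℕ) : ℕ∞) by push_cast; ring, Nat.cast_le] at h3
    have h4 : 1 ≤ 2 ^ k := Nat.one_le_two_pow
    omega
  exact aux_core k (by omega) V G h1
end
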